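/- For r ≥ 3, all u, v ∈ L^{r+1}(T³;ℝ³) and any test field z ∈ L^{r+1}, the Taylor remainder estimate |⟨C(u) - C(v), z⟩| ≤ r 2^{r-2} ( ‖|u|^{(r-1)/2}(u-v)‖_{L²} ‖u‖_{L^{r+1}}^{(r-1)/2} + ‖|v|^{(r-1)/2}(u-v)‖_{L²} ‖v‖_{L^{r+1}}^{(r-1)/2} ) ‖z‖_{L^{r+1}} holds, where C(w) = P(|w|^{r-1}w). -/

import Mathlib

open MeasureTheory Real
noncomputable section

/-- Euclidean 3-space, used both as the periodic box parametrization and target. -/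
abbrev E3 := EuclideanSpace ℝ (Fin 3)

/-- The fundamental domain `[0,L]³` of the torus `T³`. -/
def box (L : ℝ) : Set E3 := {x | ∀ i, x i ∈ Set.Icc (0 : ℝ) L}

/-- The standard basis vector `e_i`. -/
def e3 (i : Fin 3) : E3 := EuclideanSpace.single i 1

/-- `u` is `L`-periodic in each coordinate direction. -/
def Periodic3 (L : ℝ) {α : Type*} (u : E3 → α) : Prop :=
  ∀ (x : E3) (i : Fin 3), u (x + L • e3 i) = u x

/-- `|∇u|² = Σ_{i,j} (∂u_j/∂x_i)²`. -/
def gradNormSq (u : E3 → E3) (x : E3) : ℝ :=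
  ∑ i, ∑ j, (fderiv ℝ u x (e3 i) j) ^ 2

/-- `|∇f|²` for a scalar function. -/
def gradNormSqScalar (f : E3 → ℝ) (x : E3) : ℝ :=
  ∑ i, (fderiv ℝ f x (e3 i)) ^ 2

/-- `u` is divergence free. -/
def divFree (u : E3 → E3) : Prop := ∀ x, ∑ i, fderiv ℝ u x (e3 i) i = 0

/-- The Laplacian `Δu`. -/
def lap (u : E3 → E3) (x : E3) : E3 :=
  ∑ i, fderiv ℝ (fun y => fderiv ℝ u y (e3 i)) x (e3 i)

/-- The Navier–Stokes trilinear form `b(u,v,w) = ∫ (u·∇)v·w`. -/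
def triB (L : ℝ) (u v w : E3 → E3) : ℝ :=
  ∫ x in box L, ∑ i, ∑ j, u x i * fderiv ℝ v x (e3 i) j * w x j

/-- The `L^p` norm over the fundamental domain (for a real exponent `p`). -/
def LpNorm (L p : ℝ) (u : E3 → E3) : ℝ := (∫ x in box L, ‖u x‖ ^ p) ^ (1 / p)

/-- The square of the `V`-norm, `‖u‖_V² = ∫ |∇u|²`. -/
def VnormSq (L : ℝ) (u : E3 → E3) : ℝ := ∫ x in box L, gradNormSq u x

/-- The `V`-norm `‖u‖_V = ‖∇u‖_{L²}`. -/
def Vnorm (L : ℝ) (u : E3 → E3) : ℝ := Real.sqrt (VnormSq L u)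



lemma aux_memLp {α : Type*} [MeasurableSpace α] {μ : Measure α} {f : α → ℝ} {p : ℝ}
    (hp : 0 < p) (hm : AEStronglyMeasurable f μ) (h0 : ∀ x, 0 ≤ f x)
    (hi : Integrable (fun x => f x ^ p) μ) : MemLp f (ENNReal.ofReal p) μ := by
  have hne : ENNReal.ofReal p ≠ 0 := by
    simp [ENNReal.ofReal_eq_zero]; linarith
  have hnt : ENNReal.ofReal p ≠ ⊤ := ENNReal.ofReal_ne_top
  have h1 : MemLp (fun x => ‖f x‖ ^ (ENNReal.ofReal p).toReal)
      (ENNReal.ofReal p / ENNReal.ofReal p) μ := by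
    rw [ENNReal.div_self hne hnt, memLp_one_iff_integrable]
    refine hi.congr (Filter.Eventually.of_forall fun x => ?_)
    simp only [ENNReal.toReal_ofReal hp.le, Real.norm_of_nonneg (h0 x)]
  exact (memLp_norm_rpow_iff hm hne hnt).mp h1

lemma aux_conj2 : Real.HolderConjugate 2 2 := Real.holderConjugate_iff.2 ⟨one_lt_two, by norm_num⟩



/-- MVT bound for rpow. -/
lemma aux_rpow_sub_rpow_le {p : ℝ} (hp : 1 ≤ p) {a b : ℝ} (hb : 0 ≤ b) (hba : b ≤ a) :
    a ^ p - b ^ p ≤ p * a ^ (p - 1) * (a - b) := by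
  have hder : ∀ t ∈ Set.Icc b a,
      HasDerivWithinAt (fun s : ℝ => s ^ p) (p * t ^ (p - 1)) (Set.Icc b a) t :=
    fun t _ => (Real.hasDerivAt_rpow_const (Or.inr hp)).hasDerivWithinAt
  have hbound : ∀ t ∈ Set.Icc b a, ‖p * t ^ (p - 1)‖ ≤ p * a ^ (p - 1) := by
    intro t ht
    have ht0 : 0 ≤ t := hb.trans ht.1
    rw [Real.norm_eq_abs, abs_of_nonneg (by positivity)]
    exact mul_le_mul_of_nonneg_left (Real.rpow_le_rpow ht0 ht.2 (by linarith)) (by linarith)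
  have h := Convex.norm_image_sub_le_of_norm_hasDerivWithin_le hder hbound (convex_Icc b a)
    (Set.left_mem_Icc.2 hba) (Set.right_mem_Icc.2 hba)
  calc a ^ p - b ^ p ≤ |a ^ p - b ^ p| := le_abs_self _
    _ ≤ p * a ^ (p - 1) * |a - b| := by simpa [Real.norm_eq_abs] using h
    _ = p * a ^ (p - 1) * (a - b) := by rw [abs_of_nonneg (by linarith)]

lemma aux_abs_rpow_sub_rpow {p : ℝ} (hp : 1 ≤ p) {a b : ℝ} (ha : 0 ≤ a) (hb : 0 ≤ b) :
    |a ^ p - b ^ p| ≤ p * (a ^ (p - 1) + b ^ (p - 1)) * |a - b| := by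
  have hp0 : 0 < p := by linarith
  rcases le_total b a with h | h
  · rw [abs_of_nonneg (sub_nonneg.2 (Real.rpow_le_rpow hb h hp0.le)),
      abs_of_nonneg (sub_nonneg.2 h)]
    have := aux_rpow_sub_rpow_le hp hb h
    have h1 : 0 ≤ b ^ (p - 1) := Real.rpow_nonneg hb _
    nlinarith [mul_nonneg (mul_nonneg hp0.le h1) (sub_nonneg.2 h)]
  · rw [abs_of_nonpos (sub_nonpos.2 (Real.rpow_le_rpow ha h hp0.le)),
      abs_of_nonpos (sub_nonpos.2 h)]
    have := aux_rpow_sub_rpow_le hp ha h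
    have h1 : 0 ≤ a ^ (p - 1) := Real.rpow_nonneg ha _
    nlinarith [mul_nonneg (mul_nonneg hp0.le h1) (sub_nonneg.2 h)]

lemma aux_two_rpow (r : ℝ) (hr : 3 ≤ r) : r - 1 ≤ (2 : ℝ) ^ (r - 2) := by
  have h1 : (2 : ℝ) ^ (r - 2) = 2 * 2 ^ (r - 3) := by
    rw [show r - 2 = 1 + (r - 3) by ring, Real.rpow_add (by norm_num), Real.rpow_one]
  have h3 : (2 : ℝ) ^ (r - 3) = Real.exp (Real.log 2 * (r - 3)) :=
    Real.rpow_def_of_pos (by norm_num) _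
  have h2 : Real.log 2 * (r - 3) + 1 ≤ Real.exp (Real.log 2 * (r - 3)) :=
    Real.add_one_le_exp _
  have hlog : (0.6931471803 : ℝ) < Real.log 2 := Real.log_two_gt_d9
  nlinarith [mul_le_mul_of_nonneg_right hlog.le (by linarith : (0:ℝ) ≤ r - 3)]

lemma aux_mixed {r : ℝ} (hr : 3 ≤ r) {a c : ℝ} (ha : 0 ≤ a) (hc : 0 ≤ c) :
    a ^ (r - 1) * c ^ (2 : ℝ) ≤ a ^ (r + 1) + c ^ (r + 1) := by
  have hr1 : r - 1 + 2 = r + 1 := by ring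
  rcases le_total a c with h | h
  · have h1 : a ^ (r - 1) ≤ c ^ (r - 1) := Real.rpow_le_rpow ha h (by linarith)
    calc a ^ (r - 1) * c ^ (2 : ℝ) ≤ c ^ (r - 1) * c ^ (2 : ℝ) :=
          mul_le_mul_of_nonneg_right h1 (Real.rpow_nonneg hc _)
      _ = c ^ (r + 1) := by rw [← Real.rpow_add' hc (by rw [hr1]; linarith), hr1]
      _ ≤ a ^ (r + 1) + c ^ (r + 1) := le_add_of_nonneg_left (Real.rpow_nonneg ha _)
  · have h1 : c ^ (2 : ℝ) ≤ a ^ (2 : ℝ) := Real.rpow_le_rpow hc h (by norm_num)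
    calc a ^ (r - 1) * c ^ (2 : ℝ) ≤ a ^ (r - 1) * a ^ (2 : ℝ) :=
          mul_le_mul_of_nonneg_left h1 (Real.rpow_nonneg ha _)
      _ = a ^ (r + 1) := by rw [← Real.rpow_add' ha (by rw [hr1]; linarith), hr1]
      _ ≤ a ^ (r + 1) + c ^ (r + 1) := le_add_of_nonneg_right (Real.rpow_nonneg hc _)

/-- Pointwise Taylor bound. -/
lemma aux_ptwise {r : ℝ} (hr : 3 ≤ r) (a b : E3) :
    ‖(‖a‖ ^ (r - 1)) • a - (‖b‖ ^ (r - 1)) • b‖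
      ≤ r * 2 ^ (r - 2) * ((‖a‖ ^ (r - 1) + ‖b‖ ^ (r - 1)) * ‖a - b‖) := by
  set A := ‖a‖ with hA
  set B := ‖b‖ with hB
  have hA0 : 0 ≤ A := norm_nonneg _
  have hB0 : 0 ≤ B := norm_nonneg _
  have hdec : (A ^ (r - 1)) • a - (B ^ (r - 1)) • b
      = (A ^ (r - 1)) • (a - b) + (A ^ (r - 1) - B ^ (r - 1)) • b := by
    rw [smul_sub, sub_smul]; abel
  have hstep1 : ‖(A ^ (r - 1)) • a - (B ^ (r - 1)) • b‖
      ≤ A ^ (r - 1) * ‖a - b‖ + |A ^ (r - 1) - B ^ (r - 1)| * B := by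
    rw [hdec]
    refine (norm_add_le _ _).trans ?_
    rw [norm_smul, norm_smul, Real.norm_eq_abs, Real.norm_eq_abs,
      abs_of_nonneg (Real.rpow_nonneg hA0 _)]
  have habs : |A ^ (r - 1) - B ^ (r - 1)|
      ≤ (r - 1) * (A ^ (r - 2) + B ^ (r - 2)) * ‖a - b‖ := by
    have h := aux_abs_rpow_sub_rpow (p := r - 1) (by linarith) hA0 hB0
    have h2 : |A - B| ≤ ‖a - b‖ := abs_norm_sub_norm_le a b
    calc |A ^ (r - 1) - B ^ (r - 1)|
        ≤ (r - 1) * (A ^ (r - 1 - 1) + B ^ (r - 1 - 1)) * |A - B| := h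
      _ = (r - 1) * (A ^ (r - 2) + B ^ (r - 2)) * |A - B| := by ring_nf
      _ ≤ (r - 1) * (A ^ (r - 2) + B ^ (r - 2)) * ‖a - b‖ := by
          refine mul_le_mul_of_nonneg_left h2 ?_
          have := Real.rpow_nonneg hA0 (r - 2)
          have := Real.rpow_nonneg hB0 (r - 2)
          nlinarith
  have hmix : (A ^ (r - 2) + B ^ (r - 2)) * B ≤ A ^ (r - 1) + 2 * B ^ (r - 1) := by
    have hBB : B ^ (r - 2) * B = B ^ (r - 1) := by
      nth_rewrite 2 [show B = B ^ (1:ℝ) by rw [Real.rpow_one]]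
      rw [← Real.rpow_add' hB0 (by intro hc; linarith)]
      congr 1; ring
    have hAB : A ^ (r - 2) * B ≤ A ^ (r - 1) + B ^ (r - 1) := by
      rcases le_total A B with h | h
      · have : A ^ (r - 2) ≤ B ^ (r - 2) := Real.rpow_le_rpow hA0 h (by linarith)
        calc A ^ (r - 2) * B ≤ B ^ (r - 2) * B := mul_le_mul_of_nonneg_right this hB0
          _ = B ^ (r - 1) := hBB
          _ ≤ _ := le_add_of_nonneg_left (Real.rpow_nonneg hA0 _)
      · have hAA : A ^ (r - 2) * A = A ^ (r - 1) := by
          nth_rewrite 2 [show A = A ^ (1:ℝ) by rw [Real.rpow_one]]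
          rw [← Real.rpow_add' hA0 (by intro hc; linarith)]
          congr 1; ring
        calc A ^ (r - 2) * B ≤ A ^ (r - 2) * A :=
              mul_le_mul_of_nonneg_left h (Real.rpow_nonneg hA0 _)
          _ = A ^ (r - 1) := hAA
          _ ≤ _ := le_add_of_nonneg_right (Real.rpow_nonneg hB0 _)
    nlinarith [hBB]
  -- combine
  have hc1 : (1 : ℝ) ≤ 2 ^ (r - 2) := Real.one_le_rpow (by norm_num) (by linarith)
  have hc2 : r - 1 ≤ (2:ℝ) ^ (r - 2) := aux_two_rpow r hr
  set X := A ^ (r - 1)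
  set Y := B ^ (r - 1)
  have hX : 0 ≤ X := Real.rpow_nonneg hA0 _
  have hY : 0 ≤ Y := Real.rpow_nonneg hB0 _
  have hd : 0 ≤ ‖a - b‖ := norm_nonneg _
  calc ‖(A ^ (r - 1)) • a - (B ^ (r - 1)) • b‖
      ≤ X * ‖a - b‖ + |A ^ (r - 1) - B ^ (r - 1)| * B := hstep1
    _ ≤ X * ‖a - b‖ + ((r - 1) * (A ^ (r - 2) + B ^ (r - 2)) * ‖a - b‖) * B := by
        refine add_le_add_right (mul_le_mul_of_nonneg_right habs hB0) _
    _ = X * ‖a - b‖ + (r - 1) * ((A ^ (r - 2) + B ^ (r - 2)) * B) * ‖a - b‖ := by ring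
    _ ≤ X * ‖a - b‖ + (r - 1) * (X + 2 * Y) * ‖a - b‖ := by
        refine add_le_add_right (mul_le_mul_of_nonneg_right
          (mul_le_mul_of_nonneg_left hmix (by linarith)) hd) _
    _ ≤ r * 2 ^ (r - 2) * ((X + Y) * ‖a - b‖) := by
        have e1 : r ≤ r * 2 ^ (r - 2) := by nlinarith
        have e2 : 2 * (r - 1) ≤ r * 2 ^ (r - 2) := by nlinarith
        have key := mul_nonneg (add_nonneg
          (mul_nonneg (sub_nonneg.2 e1) hX)
          (mul_nonneg (sub_nonneg.2 e2) hY)) hd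
        nlinarith [key]


lemma aux_key (L r : ℝ) (hr : 3 ≤ r) (w u v z : E3 → E3)
    (hw : IntegrableOn (fun x => ‖w x‖ ^ (r + 1)) (box L))
    (hz : IntegrableOn (fun x => ‖z x‖ ^ (r + 1)) (box L))
    (h : IntegrableOn (fun x => ‖w x‖ ^ (r - 1) * ‖u x - v x‖ ^ 2) (box L)) :
    Integrable (fun x => Real.sqrt (‖w x‖ ^ (r - 1) * ‖u x - v x‖ ^ 2)
        * (Real.sqrt (‖w x‖ ^ (r - 1)) * ‖z x‖)) (volume.restrict (box L)) ∧
      (∫ x in box L, Real.sqrt (‖w x‖ ^ (r - 1) * ‖u x - v x‖ ^ 2)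
          * (Real.sqrt (‖w x‖ ^ (r - 1)) * ‖z x‖))
        ≤ (∫ x in box L, ‖w x‖ ^ (r - 1) * ‖u x - v x‖ ^ 2) ^ ((1 : ℝ) / 2)
            * (LpNorm L (r + 1) w ^ ((r - 1) / 2) * LpNorm L (r + 1) z) := by
  have hr1 : (0:ℝ) < r - 1 := by linarith
  have hr2 : (0:ℝ) < r + 1 := by linarith
  set μ := volume.restrict (box L) with hμ
  have hwn : AEStronglyMeasurable (fun x => ‖w x‖) μ := by
    have heq : (fun x : E3 => ‖w x‖) = fun x => (‖w x‖ ^ (r + 1)) ^ ((r + 1)⁻¹) := by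
      funext x
      rw [← Real.rpow_mul (norm_nonneg _), mul_inv_cancel₀ (by linarith), Real.rpow_one]
    rw [heq]
    exact (Real.continuous_rpow_const (inv_nonneg.2 hr2.le)).comp_aestronglyMeasurable
      hw.aestronglyMeasurable
  have hzn : AEStronglyMeasurable (fun x => ‖z x‖) μ := by
    have heq : (fun x : E3 => ‖z x‖) = fun x => (‖z x‖ ^ (r + 1)) ^ ((r + 1)⁻¹) := by
      funext x
      rw [← Real.rpow_mul (norm_nonneg _), mul_inv_cancel₀ (by linarith), Real.rpow_one]
    rw [heq]
    exact (Real.continuous_rpow_const (inv_nonneg.2 hr2.le)).comp_aestronglyMeasurable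
      hz.aestronglyMeasurable
  have hwp : ∀ s : ℝ, 0 ≤ s → AEStronglyMeasurable (fun x => ‖w x‖ ^ s) μ :=
    fun s hs => (Real.continuous_rpow_const hs).comp_aestronglyMeasurable hwn
  set D : E3 → ℝ := fun x => ‖w x‖ ^ (r - 1) * ‖u x - v x‖ ^ 2 with hDdef
  have hD0 : ∀ x, 0 ≤ D x := fun x => by positivity
  have hDm : AEStronglyMeasurable D μ := h.aestronglyMeasurable
  set f : E3 → ℝ := fun x => Real.sqrt (D x) with hfdef
  set g : E3 → ℝ := fun x => Real.sqrt (‖w x‖ ^ (r - 1)) * ‖z x‖ with hgdef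
  have hfm : AEStronglyMeasurable f μ := Real.continuous_sqrt.comp_aestronglyMeasurable hDm
  have hgm : AEStronglyMeasurable g μ :=
    (Real.continuous_sqrt.comp_aestronglyMeasurable (hwp _ hr1.le)).mul hzn
  have hf0 : ∀ x, 0 ≤ f x := fun x => Real.sqrt_nonneg _
  have hg0 : ∀ x, 0 ≤ g x := fun x => mul_nonneg (Real.sqrt_nonneg _) (norm_nonneg _)
  have hfsq : ∀ x, f x ^ (2:ℝ) = D x := fun x => by
    rw [Real.rpow_two, Real.sq_sqrt (hD0 x)]
  have hgsq : ∀ x, g x ^ (2:ℝ) = ‖w x‖ ^ (r - 1) * ‖z x‖ ^ (2:ℝ) := fun x => by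
    rw [Real.rpow_two, mul_pow, Real.sq_sqrt (Real.rpow_nonneg (norm_nonneg _) _),
      Real.rpow_two]
  have hint_g2 : Integrable (fun x => ‖w x‖ ^ (r - 1) * ‖z x‖ ^ (2:ℝ)) μ := by
    refine Integrable.mono' (hw.add hz) ((hwp _ hr1.le).mul
      ((Real.continuous_rpow_const (by norm_num)).comp_aestronglyMeasurable hzn))
      (Filter.Eventually.of_forall fun x => ?_)
    rw [Real.norm_of_nonneg (by positivity)]
    exact aux_mixed hr (norm_nonneg _) (norm_nonneg _)
  have Mf : MemLp f (ENNReal.ofReal 2) μ := aux_memLp two_pos hfm hf0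
    (h.congr (Filter.Eventually.of_forall fun x => (hfsq x).symm))
  have Mg : MemLp g (ENNReal.ofReal 2) μ := aux_memLp two_pos hgm hg0
    (hint_g2.congr (Filter.Eventually.of_forall fun x => (hgsq x).symm))
  have hint_fg : Integrable (fun x => f x * g x) μ := by
    refine Integrable.mono' (h.add hint_g2) (hfm.mul hgm)
      (Filter.Eventually.of_forall fun x => ?_)
    rw [Real.norm_of_nonneg (mul_nonneg (hf0 x) (hg0 x))]
    have e1 : f x ^ 2 = D x := by rw [← Real.rpow_two]; exact hfsq x
    have e2 : g x ^ 2 = ‖w x‖ ^ (r - 1) * ‖z x‖ ^ (2:ℝ) := by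
      rw [← Real.rpow_two]; exact hgsq x
    simp only [Pi.add_apply]
    nlinarith [sq_nonneg (f x - g x), sq_nonneg (f x), sq_nonneg (g x)]
  have CS := integral_mul_le_Lp_mul_Lq_of_nonneg aux_conj2
    (Filter.Eventually.of_forall hf0) (Filter.Eventually.of_forall hg0) Mf Mg
  have e1 : ∫ x, f x ^ (2:ℝ) ∂μ = ∫ x, D x ∂μ :=
    integral_congr_ae (Filter.Eventually.of_forall hfsq)
  have e2 : ∫ x, g x ^ (2:ℝ) ∂μ = ∫ x, ‖w x‖ ^ (r - 1) * ‖z x‖ ^ (2:ℝ) ∂μ :=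
    integral_congr_ae (Filter.Eventually.of_forall hgsq)
  rw [e1, e2] at CS
  have hconj : Real.HolderConjugate ((r + 1) / (r - 1)) ((r + 1) / 2) := by
    rw [Real.holderConjugate_iff]
    constructor
    · rw [lt_div_iff₀ hr1]; linarith
    · rw [inv_div, inv_div, ← add_div, div_eq_one_iff_eq (by linarith : r + 1 ≠ 0)]
      ring
  have hwe : ∀ x : E3, ‖w x‖ ^ (r + 1) = (‖w x‖ ^ (r - 1)) ^ ((r + 1) / (r - 1)) := by
    intro x
    rw [← Real.rpow_mul (norm_nonneg _)]
    congr 1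
    rw [mul_comm, div_mul_cancel₀ _ hr1.ne']
  have hze : ∀ x : E3, ‖z x‖ ^ (r + 1) = (‖z x‖ ^ (2:ℝ)) ^ ((r + 1) / 2) := by
    intro x
    rw [← Real.rpow_mul (norm_nonneg _)]
    congr 1
    rw [mul_comm, div_mul_cancel₀ _ (by norm_num : (2:ℝ) ≠ 0)]
  have Mw2 : MemLp (fun x => ‖w x‖ ^ (r - 1)) (ENNReal.ofReal ((r + 1) / (r - 1))) μ :=
    aux_memLp (by positivity) (hwp _ hr1.le)
      (fun x => Real.rpow_nonneg (norm_nonneg _) _)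
      (hw.congr (Filter.Eventually.of_forall fun x => hwe x))
  have Mz2 : MemLp (fun x => ‖z x‖ ^ (2:ℝ)) (ENNReal.ofReal ((r + 1) / 2)) μ :=
    aux_memLp (by positivity)
      ((Real.continuous_rpow_const (by norm_num)).comp_aestronglyMeasurable hzn)
      (fun x => Real.rpow_nonneg (norm_nonneg _) _)
      (hz.congr (Filter.Eventually.of_forall fun x => hze x))
  have Hold := integral_mul_le_Lp_mul_Lq_of_nonneg hconj
    (Filter.Eventually.of_forall fun x => Real.rpow_nonneg (norm_nonneg (w x)) _)
    (Filter.Eventually.of_forall fun x => Real.rpow_nonneg (norm_nonneg (z x)) _)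
    Mw2 Mz2
  have e3 : ∫ x, (‖w x‖ ^ (r - 1)) ^ ((r + 1) / (r - 1)) ∂μ = ∫ x, ‖w x‖ ^ (r + 1) ∂μ :=
    integral_congr_ae (Filter.Eventually.of_forall fun x => (hwe x).symm)
  have e4 : ∫ x, (‖z x‖ ^ (2:ℝ)) ^ ((r + 1) / 2) ∂μ = ∫ x, ‖z x‖ ^ (r + 1) ∂μ :=
    integral_congr_ae (Filter.Eventually.of_forall fun x => (hze x).symm)
  rw [e3, e4] at Hold
  rw [one_div_div, one_div_div] at Hold
  have hA0 : 0 ≤ ∫ x, ‖w x‖ ^ (r + 1) ∂μ := integral_nonneg fun x => by positivity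
  have hB0 : 0 ≤ ∫ x, ‖z x‖ ^ (r + 1) ∂μ := integral_nonneg fun x => by positivity
  have hmix0 : 0 ≤ ∫ x, ‖w x‖ ^ (r - 1) * ‖z x‖ ^ (2:ℝ) ∂μ :=
    integral_nonneg fun x => by positivity
  have hT : (∫ x, ‖w x‖ ^ (r - 1) * ‖z x‖ ^ (2:ℝ) ∂μ) ^ ((1:ℝ) / 2)
      ≤ LpNorm L (r + 1) w ^ ((r - 1) / 2) * LpNorm L (r + 1) z := by
    have step := Real.rpow_le_rpow hmix0 Hold (by norm_num : (0:ℝ) ≤ 1 / 2)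
    refine step.trans (le_of_eq ?_)
    rw [Real.mul_rpow (Real.rpow_nonneg hA0 _) (Real.rpow_nonneg hB0 _),
      ← Real.rpow_mul hA0, ← Real.rpow_mul hB0, LpNorm, LpNorm, ← Real.rpow_mul hA0]
    rw [hμ]
    congr 1
    · congr 1
      ring
    · congr 1
      ring
  refine ⟨hint_fg, ?_⟩
  calc ∫ x, f x * g x ∂μ
      ≤ (∫ x, D x ∂μ) ^ ((1:ℝ) / 2)
        * (∫ x, ‖w x‖ ^ (r - 1) * ‖z x‖ ^ (2:ℝ) ∂μ) ^ ((1:ℝ) / 2) := CS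
    _ ≤ (∫ x, D x ∂μ) ^ ((1:ℝ) / 2)
        * (LpNorm L (r + 1) w ^ ((r - 1) / 2) * LpNorm L (r + 1) z) := by
        exact mul_le_mul_of_nonneg_left hT (Real.rpow_nonneg (integral_nonneg hD0) _)

/-- Taylor remainder estimate for `C(w) = P(|w|^{r-1}w)`, `r ≥ 3`:
`|⟨C(u)-C(v), z⟩| ≤ r 2^{r-2}(‖|u|^{(r-1)/2}(u-v)‖_{L²}‖u‖_{L^{r+1}}^{(r-1)/2}
  + ‖|v|^{(r-1)/2}(u-v)‖_{L²}‖v‖_{L^{r+1}}^{(r-1)/2})‖z‖_{L^{r+1}}`,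
the pairing taken as the `L^{(r+1)/r}`–`L^{r+1}` duality integral. -/
theorem stmt18 (L r : ℝ) (hL : 0 < L) (hr : 3 ≤ r)
    (u v z : E3 → E3)
    (hu : IntegrableOn (fun x => ‖u x‖ ^ (r + 1)) (box L))
    (hv : IntegrableOn (fun x => ‖v x‖ ^ (r + 1)) (box L))
    (hz : IntegrableOn (fun x => ‖z x‖ ^ (r + 1)) (box L))
    (hpair : IntegrableOn
      (fun x => ∑ j, (‖u x‖ ^ (r - 1) * u x j - ‖v x‖ ^ (r - 1) * v x j) * z x j)
      (box L))
    (h1 : IntegrableOn (fun x => ‖u x‖ ^ (r - 1) * ‖u x - v x‖ ^ 2) (box L))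
    (h2 : IntegrableOn (fun x => ‖v x‖ ^ (r - 1) * ‖u x - v x‖ ^ 2) (box L)) :
    |∫ x in box L, ∑ j, (‖u x‖ ^ (r - 1) * u x j - ‖v x‖ ^ (r - 1) * v x j) * z x j|
      ≤ r * (2 : ℝ) ^ (r - 2)
          * ((∫ x in box L, ‖u x‖ ^ (r - 1) * ‖u x - v x‖ ^ 2) ^ ((1 : ℝ) / 2)
                * LpNorm L (r + 1) u ^ ((r - 1) / 2)
              + (∫ x in box L, ‖v x‖ ^ (r - 1) * ‖u x - v x‖ ^ 2) ^ ((1 : ℝ) / 2)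
                * LpNorm L (r + 1) v ^ ((r - 1) / 2))
          * LpNorm L (r + 1) z := by
  have hr1 : (0:ℝ) < r - 1 := by linarith
  have key1 := aux_key L r hr u u v z hu hz h1
  have key2 := aux_key L r hr v u v z hv hz h2
  set μ := volume.restrict (box L) with hμ
  set K := r * (2:ℝ) ^ (r - 2) with hK
  have hK0 : 0 ≤ K := by
    have : (0:ℝ) ≤ (2:ℝ) ^ (r - 2) := Real.rpow_nonneg (by norm_num) _
    nlinarith
  set q1 : E3 → ℝ := fun x => Real.sqrt (‖u x‖ ^ (r - 1) * ‖u x - v x‖ ^ 2)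
    * (Real.sqrt (‖u x‖ ^ (r - 1)) * ‖z x‖) with hq1
  set q2 : E3 → ℝ := fun x => Real.sqrt (‖v x‖ ^ (r - 1) * ‖u x - v x‖ ^ 2)
    * (Real.sqrt (‖v x‖ ^ (r - 1)) * ‖z x‖) with hq2
  have hpt : ∀ x, |∑ j, (‖u x‖ ^ (r - 1) * u x j - ‖v x‖ ^ (r - 1) * v x j) * z x j|
      ≤ K * (q1 x + q2 x) := by
    intro x
    set P : E3 := (‖u x‖ ^ (r - 1)) • u x - (‖v x‖ ^ (r - 1)) • v x with hP
    have hFx : ∑ j, (‖u x‖ ^ (r - 1) * u x j - ‖v x‖ ^ (r - 1) * v x j) * z x j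
        = inner ℝ P (z x) := by
      rw [PiLp.inner_apply]
      refine Finset.sum_congr rfl fun j _ => ?_
      simp [hP, RCLike.inner_apply, smul_eq_mul]
      ring
    have hq : ∀ a : E3, Real.sqrt (‖a‖ ^ (r - 1) * ‖u x - v x‖ ^ 2)
        * (Real.sqrt (‖a‖ ^ (r - 1)) * ‖z x‖)
        = ‖a‖ ^ (r - 1) * ‖u x - v x‖ * ‖z x‖ := by
      intro a
      rw [Real.sqrt_mul (Real.rpow_nonneg (norm_nonneg _) _),
        Real.sqrt_sq (norm_nonneg _)]
      rw [show Real.sqrt (‖a‖ ^ (r - 1)) * ‖u x - v x‖ * (Real.sqrt (‖a‖ ^ (r - 1)) * ‖z x‖)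
          = (Real.sqrt (‖a‖ ^ (r - 1)) * Real.sqrt (‖a‖ ^ (r - 1))) * ‖u x - v x‖ * ‖z x‖
        by ring]
      rw [Real.mul_self_sqrt (Real.rpow_nonneg (norm_nonneg _) _)]
    rw [hFx]
    calc |inner ℝ P (z x)| ≤ ‖P‖ * ‖z x‖ := abs_real_inner_le_norm _ _
      _ ≤ (K * ((‖u x‖ ^ (r - 1) + ‖v x‖ ^ (r - 1)) * ‖u x - v x‖)) * ‖z x‖ := by
          refine mul_le_mul_of_nonneg_right ?_ (norm_nonneg _)
          exact aux_ptwise hr (u x) (v x)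
      _ = K * (q1 x + q2 x) := by
          rw [show q1 x = ‖u x‖ ^ (r - 1) * ‖u x - v x‖ * ‖z x‖ from hq (u x),
            show q2 x = ‖v x‖ ^ (r - 1) * ‖u x - v x‖ * ‖z x‖ from hq (v x)]
          ring
  have hint : Integrable (fun x => K * (q1 x + q2 x)) μ :=
    (key1.1.add key2.1).const_mul K
  calc |∫ x in box L, ∑ j, (‖u x‖ ^ (r - 1) * u x j - ‖v x‖ ^ (r - 1) * v x j) * z x j|
      ≤ ∫ x, |∑ j, (‖u x‖ ^ (r - 1) * u x j - ‖v x‖ ^ (r - 1) * v x j) * z x j| ∂μ := by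
        simpa [Real.norm_eq_abs] using
          norm_integral_le_integral_norm (μ := μ)
            (f := fun x => ∑ j, (‖u x‖ ^ (r - 1) * u x j - ‖v x‖ ^ (r - 1) * v x j) * z x j)
    _ ≤ ∫ x, K * (q1 x + q2 x) ∂μ := by
        refine integral_mono_of_nonneg (Filter.Eventually.of_forall fun x => abs_nonneg _)
          hint (Filter.Eventually.of_forall fun x => hpt x)
    _ = K * ((∫ x, q1 x ∂μ) + ∫ x, q2 x ∂μ) := by
        rw [integral_const_mul, integral_add key1.1 key2.1]
    _ ≤ K * ((∫ x in box L, ‖u x‖ ^ (r - 1) * ‖u x - v x‖ ^ 2) ^ ((1 : ℝ) / 2)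
            * (LpNorm L (r + 1) u ^ ((r - 1) / 2) * LpNorm L (r + 1) z)
          + (∫ x in box L, ‖v x‖ ^ (r - 1) * ‖u x - v x‖ ^ 2) ^ ((1 : ℝ) / 2)
            * (LpNorm L (r + 1) v ^ ((r - 1) / 2) * LpNorm L (r + 1) z)) := by
        refine mul_le_mul_of_nonneg_left (add_le_add key1.2 key2.2) hK0
    _ = K * ((∫ x in box L, ‖u x‖ ^ (r - 1) * ‖u x - v x‖ ^ 2) ^ ((1 : ℝ) / 2)
              * LpNorm L (r + 1) u ^ ((r - 1) / 2)
            + (∫ x in box L, ‖v x‖ ^ (r - 1) * ‖u x - v x‖ ^ 2) ^ ((1 : ℝ) / 2)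
              * LpNorm L (r + 1) v ^ ((r - 1) / 2))
          * LpNorm L (r + 1) z := by ring
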